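/- arXiv:2105.11999 — 3 statements merged into one kernel-verified Lean document; each statement's English description precedes it below -/
import Mathlib

section
/- Greedy tracking on a segment is optimal: let B, E ∈ ℝ, B ≤ E, and target x* ∈ [B, E]. Define a sequence by s_0 = 0 and at each round t+1 choose c_{t+1} ∈ {B, E} to minimize |((s_t·t + c_{t+1})/(t+1)) − x*|, setting s_{t+1} = (s_t·t + c_{t+1})/(t+1). Then for every t ≥ 1, |s_t − x*| ≤ (E − B)/t. -/
lemma greedy_step (B E xstar sn sn1 n : ℝ) (hn : 0 < n) (hBE : B ≤ E)
    (hB : B ≤ xstar) (hE : xstar ≤ E)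
    (hI : |sn - xstar| ≤ (E - B) / n)
    (h1 : |sn1 - xstar| ≤ |(sn * n + B) / (n + 1) - xstar|)
    (h2 : |sn1 - xstar| ≤ |(sn * n + E) / (n + 1) - xstar|) :
    |sn1 - xstar| ≤ (E - B) / (n + 1) := by
  have hm : (0:ℝ) < n + 1 := by linarith
  rw [abs_le] at hI
  have hIu : (sn - xstar) * n ≤ E - B := by
    have h := mul_le_mul_of_nonneg_right hI.2 hn.le
    rwa [div_mul_cancel₀ _ (ne_of_gt hn)] at h
  have hIl : -(E - B) ≤ (sn - xstar) * n := by
    have h := mul_le_mul_of_nonneg_right hI.1 hn.le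
    rwa [neg_mul, div_mul_cancel₀ _ (ne_of_gt hn)] at h
  rcases le_total xstar ((sn * n + B) / (n + 1)) with h | h
  · refine h1.trans ?_
    rw [abs_of_nonneg (by linarith)]
    have heq : (sn * n + B) / (n + 1) - xstar = (sn * n + B - xstar * (n + 1)) / (n + 1) := by
      field_simp
    rw [heq]
    gcongr ?_ / _
    nlinarith
  · rcases le_total xstar ((sn * n + E) / (n + 1)) with h' | h'
    · refine h1.trans ?_
      rw [abs_of_nonpos (by linarith)]
      have heq : (sn * n + E) / (n + 1) - (sn * n + B) / (n + 1) = (E - B) / (n + 1) := by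
        ring
      linarith
    · refine h2.trans ?_
      rw [abs_of_nonpos (by linarith)]
      have heq : xstar - (sn * n + E) / (n + 1) = (xstar * (n + 1) - (sn * n + E)) / (n + 1) := by
        field_simp
      rw [show -((sn * n + E) / (n + 1) - xstar) = xstar - (sn * n + E) / (n + 1) by ring, heq]
      gcongr ?_ / _
      nlinarith

theorem greedy_tracking_optimal (B E : ℝ) (hBE : B ≤ E)
    (xstar : ℝ) (hx : xstar ∈ Set.Icc B E)
    (s c : ℕ → ℝ) (hs0 : s 0 = 0)
    (hc : ∀ t : ℕ, c (t + 1) ∈ ({B, E} : Set ℝ))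
    (hgreedy : ∀ t : ℕ, ∀ d ∈ ({B, E} : Set ℝ),
      |(s t * t + c (t + 1)) / (t + 1) - xstar| ≤ |(s t * t + d) / (t + 1) - xstar|)
    (hrec : ∀ t : ℕ, s (t + 1) = (s t * t + c (t + 1)) / (t + 1)) :
    ∀ t : ℕ, 1 ≤ t → |s t - xstar| ≤ (E - B) / t := by
  obtain ⟨hB, hE⟩ := hx
  have key : ∀ t : ℕ, |s (t + 1) - xstar| ≤ (E - B) / (t + 1) := by
    intro t
    induction t with
    | zero =>
      have h1 := hgreedy 0 B (by simp)
      rw [← hrec 0] at h1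
      simp [hs0] at h1 ⊢
      rw [abs_of_nonpos (show B - xstar ≤ 0 by linarith)] at h1
      linarith
    | succ n ih =>
      have h1 := hgreedy (n + 1) B (by simp)
      have h2 := hgreedy (n + 1) E (by simp)
      rw [← hrec (n + 1)] at h1 h2
      have hcast : ((n + 1 : ℕ) : ℝ) = (n : ℝ) + 1 := by push_cast; ring
      rw [hcast] at h1 h2 ⊢
      exact greedy_step B E xstar (s (n + 1)) (s (n + 1 + 1)) ((n : ℝ) + 1)
        (by positivity) hBE hB hE (hcast ▸ ih) h1 h2
  intro t ht
  obtain ⟨u, rfl⟩ := Nat.exists_eq_add_of_le ht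
  simpa [add_comm] using key u
end

section
/- One-step reachability of the grid optimum: let g : [0,1] → ℝ be concave. Suppose n ∈ {0,…,t} maximizes g(k/t) over k ∈ {0,…,t}. Then a maximizer of g(k/(t+1)) over k ∈ {0,…,t+1} can be found in {n, n+1}; i.e., max_{k ∈ {0,…,t+1}} g(k/(t+1)) = max(g(n/(t+1)), g((n+1)/(t+1))). -/
lemma concave_slope_prod (g : ℝ → ℝ)
    (hg : ConcaveOn ℝ (Set.Icc (0 : ℝ) 1) g)
    {A B C D : ℝ} (hA : A ∈ Set.Icc (0:ℝ) 1) (hB : B ∈ Set.Icc (0:ℝ) 1)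
    (hC : C ∈ Set.Icc (0:ℝ) 1) (hD : D ∈ Set.Icc (0:ℝ) 1)
    (hAC : A ≤ C) (hCB : C < B) (hBD : B ≤ D) :
    (g D - g C) * (B - A) ≤ (g B - g A) * (D - C) := by
  have aux : ∀ x y z : ℝ, x ∈ Set.Icc (0:ℝ) 1 → z ∈ Set.Icc (0:ℝ) 1 → x < y → y < z →
      (z - y) * g x + (y - x) * g z ≤ (z - x) * g y := by
    intro x y z hx hz hxy hyz
    have h := hg.neg.secant_mono_aux1 hx hz hxy hyz
    simp only [Pi.neg_apply] at h
    linarith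
  rcases eq_or_lt_of_le hAC with rfl | hAC'
  · rcases eq_or_lt_of_le hBD with rfl | hBD'
    · exact le_of_eq (by ring)
    · have h := aux A B D hA hD hCB hBD'
      nlinarith [h]
  · rcases eq_or_lt_of_le hBD with rfl | hBD'
    · have h := aux A C B hA hB hAC' hCB
      nlinarith [h]
    · have h1 := aux A C B hA hB hAC' hCB
      have h2 := aux C B D hC hD hCB hBD'
      have hDC : (0:ℝ) < D - C := by linarith
      have hBA : (0:ℝ) < B - A := by linarith
      have hBC : (0:ℝ) < B - C := by linarith
      nlinarith [mul_le_mul_of_nonneg_right h1 hDC.le,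
        mul_le_mul_of_nonneg_right h2 hBA.le, hBC]

set_option maxHeartbeats 1000000 in
theorem grid_optimum_one_step_reachable (g : ℝ → ℝ)
    (hg : ConcaveOn ℝ (Set.Icc (0 : ℝ) 1) g)
    (t : ℕ) (ht : 1 ≤ t) (n : ℕ) (hn : n ≤ t)
    (hmax : ∀ k : ℕ, k ≤ t → g ((k : ℝ) / t) ≤ g ((n : ℝ) / t)) :
    ∀ k : ℕ, k ≤ t + 1 →
      g ((k : ℝ) / (t + 1)) ≤
        max (g ((n : ℝ) / (t + 1))) (g (((n : ℝ) + 1) / (t + 1))) := by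
  intro k hk
  have htR : (1:ℝ) ≤ (t:ℝ) := by exact_mod_cast ht
  have ht0 : (0:ℝ) < (t:ℝ) := by linarith
  have ht1 : (0:ℝ) < (t:ℝ) + 1 := by linarith
  have hnt : (n:ℝ) ≤ (t:ℝ) := by exact_mod_cast hn
  have hkt : (k:ℝ) ≤ (t:ℝ) + 1 := by
    have : (k:ℝ) ≤ ((t+1 : ℕ) : ℝ) := by exact_mod_cast hk
    push_cast at this; linarith
  have hk0 : (0:ℝ) ≤ (k:ℝ) := Nat.cast_nonneg k
  have hn0 : (0:ℝ) ≤ (n:ℝ) := Nat.cast_nonneg n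
  have mem : ∀ a b : ℝ, 0 < b → 0 ≤ a → a ≤ b → a / b ∈ Set.Icc (0:ℝ) 1 := by
    intro a b hb ha hab
    exact ⟨by positivity, by rw [div_le_one hb]; exact hab⟩
  rcases lt_trichotomy k n with hlt | rfl | hgt
  · -- k < n : show g(k/(t+1)) ≤ g(n/(t+1))
    have hn1 : 1 ≤ n := Nat.one_le_iff_ne_zero.mpr (by omega)
    have hknR : (k:ℝ) + 1 ≤ (n:ℝ) := by exact_mod_cast hlt
    have hmax' := hmax (n-1) (by omega)
    have hcast : (((n-1 : ℕ)) : ℝ) = (n:ℝ) - 1 := by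
      push_cast [Nat.cast_sub hn1]; ring
    rw [hcast] at hmax'
    have key := concave_slope_prod g hg
      (A := (k:ℝ)/((t:ℝ)+1)) (B := (n:ℝ)/((t:ℝ)+1))
      (C := ((n:ℝ)-1)/(t:ℝ)) (D := (n:ℝ)/(t:ℝ))
      (mem _ _ ht1 hk0 (by linarith))
      (mem _ _ ht1 hn0 (by linarith))
      (mem _ _ ht0 (by linarith) (by linarith))
      (mem _ _ ht0 hn0 hnt)
      (by rw [div_le_div_iff₀ ht1 ht0]; nlinarith)
      (by rw [div_lt_div_iff₀ ht0 ht1]; nlinarith)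
      (by rw [div_le_div_iff₀ ht1 ht0]; nlinarith)
    have hBA : (0:ℝ) < (n:ℝ)/((t:ℝ)+1) - (k:ℝ)/((t:ℝ)+1) := by
      rw [sub_pos, div_lt_div_iff₀ ht1 ht1]; nlinarith
    have hDC : (0:ℝ) < (n:ℝ)/(t:ℝ) - ((n:ℝ)-1)/(t:ℝ) := by
      rw [sub_pos, div_lt_div_iff₀ ht0 ht0]; nlinarith
    have : g ((k:ℝ)/((t:ℝ)+1)) ≤ g ((n:ℝ)/((t:ℝ)+1)) := by nlinarith
    exact le_trans this (le_max_left _ _)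
  · exact le_max_left _ _
  · rcases eq_or_lt_of_le (Nat.succ_le_of_lt hgt) with heq | hgt2
    · -- k = n + 1
      have : (k:ℝ) = (n:ℝ) + 1 := by exact_mod_cast heq.symm
      rw [this]
      exact le_max_right _ _
    · -- k ≥ n + 2, hence n + 1 ≤ t
      have hn1t : n + 1 ≤ t := by omega
      have hn1tR : (n:ℝ) + 1 ≤ (t:ℝ) := by exact_mod_cast hn1t
      have hkR2 : (n:ℝ) + 2 ≤ (k:ℝ) := by exact_mod_cast hgt2
      have hmax' := hmax (n+1) hn1t
      have hcast : (((n+1 : ℕ)) : ℝ) = (n:ℝ) + 1 := by push_cast; ring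
      rw [hcast] at hmax'
      have key := concave_slope_prod g hg
        (A := (n:ℝ)/(t:ℝ)) (B := ((n:ℝ)+1)/(t:ℝ))
        (C := ((n:ℝ)+1)/((t:ℝ)+1)) (D := (k:ℝ)/((t:ℝ)+1))
        (mem _ _ ht0 hn0 hnt)
        (mem _ _ ht0 (by linarith) (by linarith))
        (mem _ _ ht1 (by linarith) (by linarith))
        (mem _ _ ht1 hk0 hkt)
        (by rw [div_le_div_iff₀ ht0 ht1]; nlinarith)
        (by rw [div_lt_div_iff₀ ht1 ht0]; nlinarith)
        (by rw [div_le_div_iff₀ ht0 ht1]; nlinarith)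
      have hBA : (0:ℝ) < ((n:ℝ)+1)/(t:ℝ) - (n:ℝ)/(t:ℝ) := by
        have h : ((n:ℝ)+1)/(t:ℝ) - (n:ℝ)/(t:ℝ) = 1/(t:ℝ) := by ring
        rw [h]; positivity
      have hDC : (0:ℝ) < (k:ℝ)/((t:ℝ)+1) - ((n:ℝ)+1)/((t:ℝ)+1) := by
        have h : (k:ℝ)/((t:ℝ)+1) - ((n:ℝ)+1)/((t:ℝ)+1) = ((k:ℝ)-((n:ℝ)+1))/((t:ℝ)+1) := by ring
        rw [h]; apply div_pos (by linarith) ht1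
      have h1 : (g (((n:ℝ)+1)/(t:ℝ)) - g ((n:ℝ)/(t:ℝ))) *
          ((k:ℝ)/((t:ℝ)+1) - ((n:ℝ)+1)/((t:ℝ)+1)) ≤ 0 :=
        mul_nonpos_of_nonpos_of_nonneg (by linarith) hDC.le
      have h2 : (g ((k:ℝ)/((t:ℝ)+1)) - g (((n:ℝ)+1)/((t:ℝ)+1))) *
          (((n:ℝ)+1)/(t:ℝ) - (n:ℝ)/(t:ℝ)) ≤ 0 := le_trans key h1
      have h3 : g ((k:ℝ)/((t:ℝ)+1)) - g (((n:ℝ)+1)/((t:ℝ)+1)) ≤ 0 := by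
        nlinarith [h2, hBA]
      exact le_trans (by linarith) (le_max_right (g ((n:ℝ)/((t:ℝ)+1))) _)
end

section
/- Max-min fairness is the limit of α-fairness on a segment: for B, E ∈ (0,∞)^K, let x_α maximize U_α over the segment [B,E]. Then as α → ∞, every limit point x of x_α maximizes min_k x_k over [B,E]. -/
open Filter Real

theorem maxmin_limit_of_alpha_fair {K : Type*} [Fintype K] [Nonempty K]
    (B E : K → ℝ) (hB : ∀ k, 0 < B k) (hE : ∀ k, 0 < E k)
    (x : ℝ → (K → ℝ))
    (hmem : ∀ α : ℝ, 1 < α → x α ∈ segment ℝ B E)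
    (hmax : ∀ α : ℝ, 1 < α → ∀ y ∈ segment ℝ B E,
      ∑ k, (y k) ^ (1 - α) / (1 - α) ≤ ∑ k, (x α k) ^ (1 - α) / (1 - α))
    (xbar : K → ℝ) (a : ℕ → ℝ) (ha1 : ∀ n, 1 < a n)
    (ha : Filter.Tendsto a Filter.atTop Filter.atTop)
    (hconv : Filter.Tendsto (fun n => x (a n)) Filter.atTop (nhds xbar)) :
    xbar ∈ segment ℝ B E ∧
    ∀ y ∈ segment ℝ B E, (⨅ k, y k) ≤ ⨅ k, xbar k := by
  -- positivity on the segment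
  have hpos : ∀ z ∈ segment ℝ B E, ∀ k, 0 < z k := by
    rintro z ⟨p, q, hp, hq, hpq, rfl⟩ k
    simp only [Pi.add_apply, Pi.smul_apply, smul_eq_mul]
    rcases hp.eq_or_lt with h | h
    · have hq1 : q = 1 := by linarith
      simp [← h, hq1, hE k]
    · have : 0 ≤ q * E k := mul_nonneg hq (hE k).le
      nlinarith [hB k, mul_pos h (hB k)]
  -- the segment is compact, hence closed
  have hcompact : IsCompact (segment ℝ B E) := by
    rw [segment_eq_image]
    exact isCompact_Icc.image (by continuity)
  have hxbar : xbar ∈ segment ℝ B E :=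
    hcompact.isClosed.mem_of_tendsto hconv
      (Filter.Eventually.of_forall fun n => hmem _ (ha1 n))
  refine ⟨hxbar, ?_⟩
  intro y hy
  by_contra hcon
  push_neg at hcon
  -- min of xbar attained at k0, min of y attained at kmin
  obtain ⟨k0, hk0⟩ := Finite.exists_min xbar
  obtain ⟨kmin, hkmin⟩ := Finite.exists_min y
  set m : ℝ := ⨅ k, y k with hm
  have hmy : m = y kmin :=
    le_antisymm (ciInf_le (Finite.bddBelow_range _) kmin) (le_ciInf hkmin)
  have hxbar0 : (⨅ k, xbar k) = xbar k0 :=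
    le_antisymm (ciInf_le (Finite.bddBelow_range _) k0) (le_ciInf hk0)
  have hmpos : 0 < m := hmy ▸ hpos y hy kmin
  set c : ℝ := xbar k0 with hc
  have hcpos : 0 < c := hpos xbar hxbar k0
  have hcm : c < m := by rw [hm, ← hxbar0]; exact hcon
  set t : ℝ := (c + m) / 2 with ht
  have htpos : 0 < t := by positivity
  have hct : c < t := by rw [ht]; linarith
  have htm : t < m := by rw [ht]; linarith
  have hd : 0 < Real.log m - Real.log t := by
    have := Real.log_lt_log htpos htm
    linarith
  set C : ℝ := (Fintype.card K : ℝ) with hC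
  have hCpos : (0 : ℝ) < C := by
    have := Fintype.card_pos (α := K)
    exact_mod_cast Nat.cast_pos.mpr this
  -- eventually pick n
  have hev1 : ∀ᶠ n in atTop, x (a n) k0 < t :=
    ((tendsto_pi_nhds.mp hconv) k0).eventually_lt_const hct
  have hev2 : ∀ᶠ n in atTop, Real.log C / (Real.log m - Real.log t) + 1 < a n - 1 := by
    filter_upwards [ha.eventually_gt_atTop
      (Real.log C / (Real.log m - Real.log t) + 2)] with n hn
    linarith
  obtain ⟨n, hn1, hn2⟩ := (hev1.and hev2).exists
  set α : ℝ := a n with hα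
  have hα1 : 1 < α := ha1 n
  have hpneg : 1 - α < 0 := by linarith
  have hxn := hmem α hα1
  -- optimality rewritten
  have hopt : ∑ k, (x α k) ^ (1 - α) ≤ ∑ k, (y k) ^ (1 - α) := by
    have h := hmax α hα1 y hy
    rw [← Finset.sum_div, ← Finset.sum_div] at h
    exact (div_le_div_right_of_neg hpneg).mp h
  -- key chain of inequalities
  have h1 : t ^ (1 - α) ≤ (x α k0) ^ (1 - α) :=
    Real.rpow_le_rpow_of_nonpos (hpos _ hxn k0) hn1.le hpneg.le
  have h2 : (x α k0) ^ (1 - α) ≤ ∑ k, (x α k) ^ (1 - α) :=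
    Finset.single_le_sum (fun k _ => Real.rpow_nonneg (hpos _ hxn k).le _)
      (Finset.mem_univ k0)
  have h3 : ∑ k, (y k) ^ (1 - α) ≤ C * m ^ (1 - α) := by
    have : ∀ k ∈ Finset.univ, (y k) ^ (1 - α) ≤ m ^ (1 - α) := fun k _ =>
      Real.rpow_le_rpow_of_nonpos hmpos (hmy ▸ hkmin k) hpneg.le
    calc ∑ k, (y k) ^ (1 - α) ≤ ∑ _k : K, m ^ (1 - α) := Finset.sum_le_sum this
      _ = C * m ^ (1 - α) := by rw [Finset.sum_const, nsmul_eq_mul, hC, Finset.card_univ]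
  have hkey : t ^ (1 - α) ≤ C * m ^ (1 - α) := le_trans h1 (le_trans h2 (le_trans hopt h3))
  -- take logarithms
  have hlog : (1 - α) * Real.log t ≤ Real.log C + (1 - α) * Real.log m := by
    have hl := Real.log_le_log (Real.rpow_pos_of_pos htpos _) hkey
    rw [Real.log_rpow htpos, Real.log_mul (ne_of_gt hCpos)
      (ne_of_gt (Real.rpow_pos_of_pos hmpos _)), Real.log_rpow hmpos] at hl
    exact hl
  have hfin : (α - 1) * (Real.log m - Real.log t) ≤ Real.log C := by nlinarith
  have hgt : Real.log C < (α - 1) * (Real.log m - Real.log t) := by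
    have h4 : Real.log C / (Real.log m - Real.log t) < α - 1 := by linarith
    calc Real.log C = Real.log C / (Real.log m - Real.log t) * (Real.log m - Real.log t) := by
          field_simp
      _ < (α - 1) * (Real.log m - Real.log t) := by
          exact mul_lt_mul_of_pos_right h4 hd
  linarith
end
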